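/- For the instance W = 132, w = (44, 33, 12), q = (2, 3, 6), the integer optimum z* = 3 and LP optimum z_LP = 259/132 satisfy z* − z_LP = 137/132 > 1; in particular the integer round-up property z* = ⌈z_LP⌉ fails since ⌈259/132⌉ = 2 < 3. -/

import Mathlib

/-- A cutting pattern for master size 132 with sizes (44, 33, 12). -/
def ValidPattern (a : Fin 3 → ℕ) : Prop :=
  44 * a 0 + 33 * a 1 + 12 * a 2 ≤ 132

/-- LP feasibility for one-sided demands q = (2,3,6). -/
def LPFeasible (x : (Fin 3 → ℕ) →₀ ℝ) : Prop :=
  (∀ a ∈ x.support, ValidPattern a) ∧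
  (∀ a, 0 ≤ x a) ∧
  (2 : ℝ) ≤ x.sum (fun a c => c * (a 0 : ℝ)) ∧
  (3 : ℝ) ≤ x.sum (fun a c => c * (a 1 : ℝ)) ∧
  (6 : ℝ) ≤ x.sum (fun a c => c * (a 2 : ℝ))

/-- Integer feasibility for one-sided demands q = (2,3,6). -/
def IntFeasible (x : (Fin 3 → ℕ) →₀ ℕ) : Prop :=
  (∀ a ∈ x.support, ValidPattern a) ∧
  2 ≤ x.sum (fun a c => c * a 0) ∧
  3 ≤ x.sum (fun a c => c * a 1) ∧
  6 ≤ x.sum (fun a c => c * a 2)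

lemma sum_w_nat (x : (Fin 3 → ℕ) →₀ ℕ) :
    x.sum (fun a c => c * (44 * a 0 + 33 * a 1 + 12 * a 2)) =
      44 * x.sum (fun a c => c * a 0) + 33 * x.sum (fun a c => c * a 1)
        + 12 * x.sum (fun a c => c * a 2) := by
  simp only [Finsupp.sum, Finset.mul_sum, ← Finset.sum_add_distrib]
  exact Finset.sum_congr rfl fun a _ => by ring

lemma sum_w_real (x : (Fin 3 → ℕ) →₀ ℝ) :
    x.sum (fun a c => c * (44 * (a 0 : ℝ) + 33 * (a 1 : ℝ) + 12 * (a 2 : ℝ))) =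
      44 * x.sum (fun a c => c * (a 0 : ℝ)) + 33 * x.sum (fun a c => c * (a 1 : ℝ))
        + 12 * x.sum (fun a c => c * (a 2 : ℝ)) := by
  simp only [Finsupp.sum, Finset.mul_sum, ← Finset.sum_add_distrib]
  exact Finset.sum_congr rfl fun a _ => by ring

lemma sum3 {M : Type*} [AddCommMonoid M] (p q r : Fin 3 → ℕ) (c d e : M)
    (f : (Fin 3 → ℕ) → M → M)
    (h0 : ∀ a, f a 0 = 0) (hadd : ∀ a b1 b2, f a (b1 + b2) = f a b1 + f a b2) :
    (Finsupp.single p c + Finsupp.single q d + Finsupp.single r e).sum f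
      = f p c + f q d + f r e := by
  rw [Finsupp.sum_add_index' h0 hadd, Finsupp.sum_add_index' h0 hadd,
    Finsupp.sum_single_index (h0 p), Finsupp.sum_single_index (h0 q),
    Finsupp.sum_single_index (h0 r)]

lemma intLB (x : (Fin 3 → ℕ) →₀ ℕ) (hx : IntFeasible x) : 3 ≤ x.sum fun _ c => c := by
  obtain ⟨hsupp, h0, h1, h2⟩ := hx
  simp only [Finsupp.sum] at h0 h1 h2 ⊢
  by_contra hcon
  push_neg at hcon
  have hW : ∑ b ∈ x.support, x b * (44 * b 0 + 33 * b 1 + 12 * b 2)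
      = 44 * ∑ b ∈ x.support, x b * b 0 + 33 * ∑ b ∈ x.support, x b * b 1
        + 12 * ∑ b ∈ x.support, x b * b 2 := by
    simp only [Finset.mul_sum, ← Finset.sum_add_distrib]
    exact Finset.sum_congr rfl fun a _ => by ring
  have hWle : ∑ b ∈ x.support, x b * (44 * b 0 + 33 * b 1 + 12 * b 2)
      ≤ ∑ b ∈ x.support, x b * 132 :=
    Finset.sum_le_sum fun b hb => Nat.mul_le_mul_left _ (hsupp b hb)
  have hc132 : ∑ b ∈ x.support, x b * 132 = (∑ b ∈ x.support, x b) * 132 :=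
    (Finset.sum_mul _ _ _).symm
  have hne : x.support.Nonempty := by
    rcases Finset.eq_empty_or_nonempty x.support with hh | hh
    · rw [hh] at h0; simp at h0
    · exact hh
  obtain ⟨a, ha⟩ := hne
  have hca : 1 ≤ x a := Nat.one_le_iff_ne_zero.mpr (Finsupp.mem_support_iff.mp ha)
  have hcle : x a ≤ ∑ b ∈ x.support, x b :=
    Finset.single_le_sum (fun _ _ => Nat.zero_le _) ha
  have hb0 : x a * a 0 ≤ ∑ b ∈ x.support, x b * b 0 :=
    Finset.single_le_sum (f := fun b => x b * b 0) (fun _ _ => Nat.zero_le _) ha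
  have hb1 : x a * a 1 ≤ ∑ b ∈ x.support, x b * b 1 :=
    Finset.single_le_sum (f := fun b => x b * b 1) (fun _ _ => Nat.zero_le _) ha
  have hb2 : x a * a 2 ≤ ∑ b ∈ x.support, x b * b 2 :=
    Finset.single_le_sum (f := fun b => x b * b 2) (fun _ _ => Nat.zero_le _) ha
  have hsplit : x a * (44 * a 0 + 33 * a 1 + 12 * a 2)
      + ∑ b ∈ x.support.erase a, x b * (44 * b 0 + 33 * b 1 + 12 * b 2)
      = ∑ b ∈ x.support, x b * (44 * b 0 + 33 * b 1 + 12 * b 2) :=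
    Finset.add_sum_erase _ (fun b => x b * (44 * b 0 + 33 * b 1 + 12 * b 2)) ha
  have hcsplit : x a + ∑ b ∈ x.support.erase a, x b = ∑ b ∈ x.support, x b :=
    Finset.add_sum_erase _ (fun b => x b) ha
  have hrest : ∑ b ∈ x.support.erase a, x b * (44 * b 0 + 33 * b 1 + 12 * b 2)
      ≤ ∑ b ∈ x.support.erase a, x b * 132 :=
    Finset.sum_le_sum fun b hb => Nat.mul_le_mul_left _ (hsupp b (Finset.mem_of_mem_erase hb))
  have hrest' : ∑ b ∈ x.support.erase a, x b * 132
      = (∑ b ∈ x.support.erase a, x b) * 132 := (Finset.sum_mul _ _ _).symm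
  have hvalid : 44 * a 0 + 33 * a 1 + 12 * a 2 ≤ 132 := hsupp a ha
  set A0 := a 0 with hA0
  set A1 := a 1 with hA1
  set A2 := a 2 with hA2
  set c := x a with hc'
  set S0 := ∑ b ∈ x.support, x b * b 0 with hS0
  set S1 := ∑ b ∈ x.support, x b * b 1 with hS1
  set S2 := ∑ b ∈ x.support, x b * b 2 with hS2
  set n := ∑ b ∈ x.support, x b with hn
  set T := ∑ b ∈ x.support, x b * (44 * b 0 + 33 * b 1 + 12 * b 2) with hT
  set R := ∑ b ∈ x.support.erase a, x b * (44 * b 0 + 33 * b 1 + 12 * b 2) with hR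
  set Rc := ∑ b ∈ x.support.erase a, x b with hRc
  set R132 := ∑ b ∈ x.support.erase a, x b * 132 with hR132
  set T132 := ∑ b ∈ x.support, x b * 132 with hT132
  clear_value A0 A1 A2 c S0 S1 S2 n T R Rc R132 T132
  clear hA0 hA1 hA2 hc' hS0 hS1 hS2 hn hT hR hRc hR132 hT132 hsupp ha
  have hc12 : c = 1 ∨ c = 2 := by omega
  rcases hc12 with hc | hc <;> rw [hc] at hsplit hb0 hb1 hb2 hcsplit
  · have h127 : 127 ≤ 44 * A0 + 33 * A1 + 12 * A2 := by omega
    have hA0' : A0 ≤ 2 := by omega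
    have hA1' : A1 ≤ 3 := by omega
    have hA2' : A2 ≤ 6 := by omega
    interval_cases A0 <;> interval_cases A1 <;> omega
  · omega

lemma intMem : ∃ x : (Fin 3 → ℕ) →₀ ℕ, IntFeasible x ∧ x.sum (fun _ c => c) = 3 := by
  refine ⟨Finsupp.single ![2,0,3] 1 + Finsupp.single ![0,3,0] 1 + Finsupp.single ![0,0,3] 1,
    ⟨?_, ?_, ?_, ?_⟩, ?_⟩
  · intro a ha
    rcases Finset.mem_union.mp (Finsupp.support_add ha) with h | h
    · rcases Finset.mem_union.mp (Finsupp.support_add h) with h' | h'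
      · rw [Finset.mem_singleton.mp (Finsupp.support_single_subset h')]
        unfold ValidPattern; decide
      · rw [Finset.mem_singleton.mp (Finsupp.support_single_subset h')]
        unfold ValidPattern; decide
    · rw [Finset.mem_singleton.mp (Finsupp.support_single_subset h)]
      unfold ValidPattern; decide
  · rw [sum3 (f := fun a c => c * a 0) _ _ _ _ _ _ (fun _ => by ring) (fun _ _ _ => by ring)]; decide
  · rw [sum3 (f := fun a c => c * a 1) _ _ _ _ _ _ (fun _ => by ring) (fun _ _ _ => by ring)]; decide
  · rw [sum3 (f := fun a c => c * a 2) _ _ _ _ _ _ (fun _ => by ring) (fun _ _ _ => by ring)]; decide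
  · rw [sum3 (f := fun _ c => c) _ _ _ _ _ _ (fun _ => rfl) (fun _ _ _ => rfl)]

lemma lpMem : ∃ x : (Fin 3 → ℕ) →₀ ℝ, LPFeasible x ∧ x.sum (fun _ c => c) = 259 / 132 := by
  refine ⟨Finsupp.single ![3,0,0] (2/3) + Finsupp.single ![0,4,0] (3/4)
      + Finsupp.single ![0,0,11] (6/11), ⟨?_, ?_, ?_, ?_, ?_⟩, ?_⟩
  · intro a ha
    rcases Finset.mem_union.mp (Finsupp.support_add ha) with h | h
    · rcases Finset.mem_union.mp (Finsupp.support_add h) with h' | h'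
      · rw [Finset.mem_singleton.mp (Finsupp.support_single_subset h')]
        unfold ValidPattern; decide
      · rw [Finset.mem_singleton.mp (Finsupp.support_single_subset h')]
        unfold ValidPattern; decide
    · rw [Finset.mem_singleton.mp (Finsupp.support_single_subset h)]
      unfold ValidPattern; decide
  · intro a
    simp only [Finsupp.add_apply, Finsupp.single_apply]
    split_ifs <;> norm_num
  · rw [sum3 (f := fun a c => c * (a 0 : ℝ)) _ _ _ _ _ _ (fun _ => by ring) (fun _ _ _ => by ring)]
    norm_num
  · rw [sum3 (f := fun a c => c * (a 1 : ℝ)) _ _ _ _ _ _ (fun _ => by ring) (fun _ _ _ => by ring)]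
    norm_num
  · rw [sum3 (f := fun a c => c * (a 2 : ℝ)) _ _ _ _ _ _ (fun _ => by ring) (fun _ _ _ => by ring)]
    show (6 : ℝ) ≤ 2 / 3 * ((0 : ℕ) : ℝ) + 3 / 4 * ((0 : ℕ) : ℝ) + 6 / 11 * ((11 : ℕ) : ℝ)
    norm_num
  · rw [sum3 (f := fun _ c => c) _ _ _ _ _ _ (fun _ => rfl) (fun _ _ _ => rfl)]
    norm_num

lemma lpLB (x : (Fin 3 → ℕ) →₀ ℝ) (hx : LPFeasible x) :
    259 / 132 ≤ x.sum fun _ c => c := by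
  obtain ⟨hsupp, hpos, h0, h1, h2⟩ := hx
  have hW := sum_w_real x
  have hle : x.sum (fun a c => c * (44 * (a 0 : ℝ) + 33 * (a 1 : ℝ) + 12 * (a 2 : ℝ)))
      ≤ 132 * x.sum fun _ c => c := by
    simp only [Finsupp.sum, Finset.mul_sum]
    refine Finset.sum_le_sum fun a ha => ?_
    have hv : 44 * a 0 + 33 * a 1 + 12 * a 2 ≤ 132 := hsupp a ha
    have hv' : 44 * (a 0 : ℝ) + 33 * (a 1 : ℝ) + 12 * (a 2 : ℝ) ≤ 132 := by
      exact_mod_cast hv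
    calc x a * (44 * (a 0 : ℝ) + 33 * (a 1 : ℝ) + 12 * (a 2 : ℝ))
        ≤ x a * 132 := mul_le_mul_of_nonneg_left hv' (hpos a)
      _ = 132 * x a := mul_comm _ _
  linarith

theorem stmt2 (zLP : ℝ) (zstar : ℕ)
    (hLP : IsLeast {z : ℝ | ∃ x : (Fin 3 → ℕ) →₀ ℝ, LPFeasible x ∧ x.sum (fun _ c => c) = z} zLP)
    (hInt : IsLeast {n : ℕ | ∃ x : (Fin 3 → ℕ) →₀ ℕ, IntFeasible x ∧ x.sum (fun _ c => c) = n} zstar) :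
    zstar = 3 ∧ zLP = 259 / 132 ∧
    (zstar : ℝ) - zLP = 137 / 132 ∧ (1 : ℝ) < 137 / 132 ∧
    ⌈zLP⌉ = 2 ∧ (zstar : ℤ) ≠ ⌈zLP⌉ := by
  obtain ⟨⟨xI, hxI, hxIsum⟩, hIlb⟩ := hInt
  obtain ⟨⟨xL, hxL, hxLsum⟩, hLlb⟩ := hLP
  have hzstar : zstar = 3 := by
    have h1 : zstar ≤ 3 := hIlb intMem
    have h2 : 3 ≤ zstar := hxIsum ▸ intLB xI hxI
    omega
  have hzLP : zLP = 259 / 132 := by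
    have h1 : zLP ≤ 259 / 132 := hLlb lpMem
    have h2 : 259 / 132 ≤ zLP := hxLsum ▸ lpLB xL hxL
    linarith
  have hceil : ⌈zLP⌉ = 2 := by
    rw [hzLP, Int.ceil_eq_iff]
    norm_num
  refine ⟨hzstar, hzLP, ?_, by norm_num, hceil, ?_⟩
  · rw [hzstar, hzLP]; norm_num
  · rw [hzstar, hceil]; decide
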